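/- There exist utility functions u1, u2, u3 : {c1, c2, c3} → [0,1] and a probability distribution over weight vectors (w1, w2, w3) with w_f ≥ 0 and w1+w2+w3 = 1 such that Pr[c1 ≻ c2] > 1/2 and Pr[c2 ≻ c3] > 1/2 but Pr[c1 ≻ c3] < 1/2, where c ≻ c' means ∑_f w_f·u_f(c) > ∑_f w_f·u_f(c'). -/

import Mathlib

open MeasureTheory

noncomputable def myμ : Measure (Fin 3 → ℝ) :=
  (3 : ENNReal)⁻¹ • (Measure.dirac ![(1:ℝ),0,0] + Measure.dirac ![(0:ℝ),1,0] +
    Measure.dirac ![(0:ℝ),0,1])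

lemma half_lt : (1:ENNReal)/2 < 2*3⁻¹ := by
  rw [show (2:ENNReal)*3⁻¹ = 2/3 from (div_eq_mul_inv _ _).symm,
    ENNReal.div_lt_iff (by norm_num) (by norm_num),
    show (2:ENNReal)/3*2 = 4/3 by rw [div_eq_mul_inv, div_eq_mul_inv]; ring,
    ENNReal.lt_div_iff_mul_lt (by norm_num) (by norm_num)]
  norm_num

lemma lt_half : (3:ENNReal)⁻¹ < 1/2 := by
  rw [show (3:ENNReal)⁻¹ = 1/3 from (one_div _).symm,
    ENNReal.div_lt_iff (by norm_num) (by norm_num),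
    show (1:ENNReal)/2*3 = 3/2 by rw [div_eq_mul_inv, div_eq_mul_inv]; ring,
    ENNReal.lt_div_iff_mul_lt (by norm_num) (by norm_num)]
  norm_num

lemma myμ_apply (s : Set (Fin 3 → ℝ)) (hs : MeasurableSet s) :
    myμ s = 3⁻¹ * (s.indicator 1 ![(1:ℝ),0,0] + s.indicator 1 ![(0:ℝ),1,0] +
      s.indicator 1 ![(0:ℝ),0,1]) := by
  simp [myμ, Measure.dirac_apply' _ hs]; ring

lemma sums_meas (u : Fin 3 → Fin 3 → ℝ) (i j : Fin 3) :
    MeasurableSet {w : Fin 3 → ℝ | ∑ f, w f * u f i > ∑ f, w f * u f j} := by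
  apply measurableSet_lt <;>
  exact Finset.measurable_sum _ (fun f _ => (measurable_pi_apply f).mul_const _)

theorem stmt_17 :
    ∃ (u : Fin 3 → Fin 3 → ℝ), (∀ f c, u f c ∈ Set.Icc (0:ℝ) 1) ∧
    ∃ (μ : Measure (Fin 3 → ℝ)), IsProbabilityMeasure μ ∧
      μ {w | (∀ f, 0 ≤ w f) ∧ ∑ f, w f = 1} = 1 ∧
      μ {w | ∑ f, w f * u f 0 > ∑ f, w f * u f 1} > 1/2 ∧
      μ {w | ∑ f, w f * u f 1 > ∑ f, w f * u f 2} > 1/2 ∧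
      μ {w | ∑ f, w f * u f 0 > ∑ f, w f * u f 2} < 1/2 := by
  set u : Fin 3 → Fin 3 → ℝ := ![![1, 1/2, 0], ![0, 1, 1/2], ![1/2, 0, 1]] with hu
  refine ⟨u, ?_, myμ, ?_, ?_, ?_, ?_, ?_⟩
  · intro f c
    fin_cases f <;> fin_cases c <;> norm_num [hu]
  · constructor
    rw [myμ_apply _ MeasurableSet.univ]
    simp only [Set.indicator_univ, Pi.one_apply]
    rw [show (1:ENNReal)+1+1 = 3 by norm_num]
    exact ENNReal.inv_mul_cancel (by norm_num) (by norm_num)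
  · have h : ∀ s : Set (Fin 3 → ℝ), ![(1:ℝ),0,0] ∈ s → ![(0:ℝ),1,0] ∈ s →
        ![(0:ℝ),0,1] ∈ s → myμ s = 1 := by
      intro s h1 h2 h3
      simp only [myμ, Measure.smul_apply, Measure.add_apply, smul_eq_mul,
        Measure.dirac_apply_of_mem h1, Measure.dirac_apply_of_mem h2,
        Measure.dirac_apply_of_mem h3]
      rw [show (1:ENNReal)+1+1 = 3 by norm_num]
      exact ENNReal.inv_mul_cancel (by norm_num) (by norm_num)
    apply h <;>
      exact ⟨by intro f; fin_cases f <;> norm_num, by norm_num [Fin.sum_univ_three, Matrix.cons_val_two, Matrix.tail_cons]⟩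
  · rw [myμ_apply _ (sums_meas u 0 1)]
    rw [Set.indicator_of_mem (by norm_num [hu, Fin.sum_univ_three, Matrix.cons_val_two, Matrix.tail_cons]),
      Set.indicator_of_notMem (by norm_num [hu, Fin.sum_univ_three, Matrix.cons_val_two, Matrix.tail_cons]),
      Set.indicator_of_mem (by norm_num [hu, Fin.sum_univ_three, Matrix.cons_val_two, Matrix.tail_cons])]
    show (1:ENNReal)/2 < _
    simp only [Pi.one_apply]
    rw [show (3:ENNReal)⁻¹*(1+0+1) = 2*3⁻¹ by ring]
    exact half_lt
  · rw [myμ_apply _ (sums_meas u 1 2)]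
    rw [Set.indicator_of_mem (by norm_num [hu, Fin.sum_univ_three, Matrix.cons_val_two, Matrix.tail_cons]),
      Set.indicator_of_mem (by norm_num [hu, Fin.sum_univ_three, Matrix.cons_val_two, Matrix.tail_cons]),
      Set.indicator_of_notMem (by norm_num [hu, Fin.sum_univ_three, Matrix.cons_val_two, Matrix.tail_cons])]
    show (1:ENNReal)/2 < _
    simp only [Pi.one_apply]
    rw [show (3:ENNReal)⁻¹*(1+1+0) = 2*3⁻¹ by ring]
    exact half_lt
  · rw [myμ_apply _ (sums_meas u 0 2)]
    rw [Set.indicator_of_mem (by norm_num [hu, Fin.sum_univ_three, Matrix.cons_val_two, Matrix.tail_cons]),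
      Set.indicator_of_notMem (by norm_num [hu, Fin.sum_univ_three, Matrix.cons_val_two, Matrix.tail_cons]),
      Set.indicator_of_notMem (by norm_num [hu, Fin.sum_univ_three, Matrix.cons_val_two, Matrix.tail_cons])]
    simp only [Pi.one_apply]
    rw [show (3:ENNReal)⁻¹*(1+0+0) = 3⁻¹ by ring]
    exact lt_half
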